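/- For all j, j′ ∈ [d], the spiral shifting operators commute: g_{j′} ∘ g_j = g_j ∘ g_{j′} as maps from ℕ^d to ℕ^d. -/

import Mathlib

namespace Spiral

/-- The size `n(x) = n₁ + ⋯ + n_d` of a configuration `x ∈ ℕ^d`. -/
def size {d : ℕ} (x : Fin d → ℕ) : ℕ := ∑ i, x i

/-- The weight `W(x) = Σ_{i<j} (max(0, x_j − x_i) + max(0, x_i − x_j − 1))`
(truncated ℕ-subtraction realizes the `max(0,·)`). -/
def weight {d : ℕ} (x : Fin d → ℕ) : ℕ :=
  ∑ i : Fin d, ∑ j : Fin d, if i < j then (x j - x i) + (x i - x j - 1) else 0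

/-- The configuration `x` as a set of points of `[d] × ℕ`: the point `(i, n)` (seat `i`
0-indexed, level `n`) is encoded as the natural number `n*d + i`. The usual order on the
encodings is exactly the height order `≺` (height `h(i,n) = n + i/d`), and the spiral
shift `δ + s/d` is encoded as `+ s`. -/
def pts (d : ℕ) (x : Fin d → ℕ) : Finset ℕ :=
  Finset.image (fun i : Fin d => x i * d + i.val) Finset.univ

/-- The points of `x` listed in increasing height order: `δ¹(x), …, δ^d(x)`. -/
def sortedPts (d : ℕ) (x : Fin d → ℕ) : List ℕ :=
  (pts d x).sort (· ≤ ·)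

/-- The lowest point strictly above `p` (along the spiral) whose seat lies in `S`. -/
noncomputable def nextPt (d : ℕ) (S : Finset ℕ) (p : ℕ) : ℕ :=
  sInf {q : ℕ | p < q ∧ q % d ∈ S}

/-- The spiral shifting operator `g_j` (for `1 ≤ j ≤ d`): it fixes the lowest `j - 1`
points `δ¹(x), …, δ^{j-1}(x)` and moves each remaining point `δ^k(x)` (`k ≥ j`) to
`δ^k(x) + s_k/d`, where `s_k` is the minimal positive integer such that the seat of
`δ^k(x) + s_k/d` lies in `{i(δ^j(x)), …, i(δ^d(x))}`. The resulting configuration is read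
off from the new point set (which has exactly one point per seat). -/
noncomputable def gOp (d : ℕ) (j : ℕ) (x : Fin d → ℕ) : Fin d → ℕ := fun i =>
  let L := sortedPts d x
  let low := L.take (j - 1)
  let high := L.drop (j - 1)
  let S : Finset ℕ := high.toFinset.image (· % d)
  let Q : Finset ℕ := low.toFinset ∪ (high.map (nextPt d S)).toFinset
  ∑ q ∈ Q.filter (fun q => q % d = i.val), q / d

/-- `g^a := g₁^{a₁} ∘ ⋯ ∘ g_d^{a_d}` (here `a i` is the exponent of `g_{i+1}`). -/
noncomputable def gIter (d : ℕ) (a : Fin d → ℕ) (x : Fin d → ℕ) : Fin d → ℕ :=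
  (List.finRange d).foldr (fun j y => (gOp d (j.val + 1))^[a j] y) x

end Spiral

namespace SpiralAux
open Spiral

/-! ### Counting subline points -/

def cnt (d : ℕ) (S : Finset ℕ) (q : ℕ) : ℕ :=
  ((Finset.range q).filter (fun t => t % d ∈ S)).card

lemma cnt_mono {d : ℕ} {S : Finset ℕ} {q q' : ℕ} (h : q ≤ q') : cnt d S q ≤ cnt d S q' :=
  Finset.card_le_card (Finset.filter_subset_filter _ (Finset.range_subset_range.2 h))

lemma cnt_succ (d : ℕ) (S : Finset ℕ) (q : ℕ) :
    cnt d S (q + 1) = cnt d S q + (if q % d ∈ S then 1 else 0) := by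
  unfold cnt
  rw [Finset.range_add_one, Finset.filter_insert]
  split
  · rw [Finset.card_insert_of_notMem (by simp)]
  · simp

lemma cnt_strict {d : ℕ} {S : Finset ℕ} {q q' : ℕ} (hq : q % d ∈ S) (h : q < q') :
    cnt d S q < cnt d S q' := by
  have h1 := cnt_succ d S q
  have h2 : cnt d S (q + 1) ≤ cnt d S q' := cnt_mono h
  simp [hq] at h1
  omega

lemma cnt_gap {d : ℕ} {S : Finset ℕ} {q v : ℕ} (hq : q % d ∈ S) (hlt : q < v)
    (hgap : ∀ t, q < t → t < v → t % d ∉ S) : cnt d S v = cnt d S q + 1 := by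
  have hins : (Finset.range v).filter (fun t => t % d ∈ S)
      = insert q ((Finset.range q).filter (fun t => t % d ∈ S)) := by
    ext t
    simp only [Finset.mem_filter, Finset.mem_range, Finset.mem_insert]
    constructor
    · rintro ⟨htv, htS⟩
      rcases lt_trichotomy t q with h | h | h
      · exact Or.inr ⟨h, htS⟩
      · exact Or.inl h
      · exact absurd htS (hgap t h htv)
    · rintro (rfl | ⟨h1, h2⟩)
      · exact ⟨hlt, hq⟩
      · exact ⟨h1.trans hlt, h2⟩
  unfold cnt
  rw [hins, Finset.card_insert_of_notMem (by simp)]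

/-! ### basic nextPt lemmas -/

lemma nextPt_exists {d : ℕ} {S : Finset ℕ} (hd : 0 < d) (hex : ∃ s ∈ S, s < d) (p : ℕ) :
    ∃ q, p < q ∧ q % d ∈ S := by
  obtain ⟨s, hs, hsd⟩ := hex
  refine ⟨s + (p + 1) * d, ?_, ?_⟩
  · have : p + 1 ≤ (p + 1) * d := Nat.le_mul_of_pos_right _ hd
    omega
  · rw [Nat.add_mul_mod_self_right, Nat.mod_eq_of_lt hsd]
    exact hs

lemma nextPt_gt {d : ℕ} {S : Finset ℕ} (hd : 0 < d) (hex : ∃ s ∈ S, s < d) (p : ℕ) :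
    p < nextPt d S p :=
  (Nat.sInf_mem (nextPt_exists hd hex p)).1

lemma nextPt_mem {d : ℕ} {S : Finset ℕ} (hd : 0 < d) (hex : ∃ s ∈ S, s < d) (p : ℕ) :
    nextPt d S p % d ∈ S :=
  (Nat.sInf_mem (nextPt_exists hd hex p)).2

lemma nextPt_min {d : ℕ} {S : Finset ℕ} {p q : ℕ} (h : p < q) (hq : q % d ∈ S) :
    nextPt d S p ≤ q :=
  Nat.sInf_le ⟨h, hq⟩

lemma cnt_nextPt {d : ℕ} {S : Finset ℕ} {p : ℕ} (hd : 0 < d) (hex : ∃ s ∈ S, s < d)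
    (hp : p % d ∈ S) : cnt d S (nextPt d S p) = cnt d S p + 1 :=
  cnt_gap hp (nextPt_gt hd hex p)
    (fun t h1 h2 ht => absurd (nextPt_min h1 ht) (by omega))

/-! ### periodicity of cnt -/

lemma eq_of_mod_eq_of_close {d t t' : ℕ} (h : t % d = t' % d) (h1 : t ≤ t') (h2 : t' < t + d) :
    t = t' := by
  obtain ⟨k, hk⟩ := (Nat.modEq_iff_dvd' h1).mp h
  rcases Nat.eq_zero_or_pos k with rfl | hkpos
  · simp at hk; omega
  · have : d ≤ d * k := Nat.le_mul_of_pos_right _ hkpos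
    omega

lemma cnt_add_d {d : ℕ} {S : Finset ℕ} (hd : 0 < d) (hS : ∀ s ∈ S, s < d) (q : ℕ) :
    cnt d S (q + d) = cnt d S q + S.card := by
  have hsplit : Finset.range (q + d) = Finset.range q ∪ Finset.Ico q (q + d) := by
    rw [Finset.range_eq_Ico, Finset.range_eq_Ico,
      Finset.Ico_union_Ico_eq_Ico (Nat.zero_le q) (Nat.le_add_right q d)]
  have hdisj : Disjoint ((Finset.range q).filter (fun t => t % d ∈ S))
      ((Finset.Ico q (q + d)).filter (fun t => t % d ∈ S)) :=
    Finset.disjoint_filter_filter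
      (by rw [Finset.range_eq_Ico]; exact Finset.Ico_disjoint_Ico_consecutive 0 q (q + d))
  have hcard : ((Finset.Ico q (q + d)).filter (fun t => t % d ∈ S)).card = S.card := by
    apply Finset.card_bij (fun t _ => t % d)
    · intro t ht; exact (Finset.mem_filter.mp ht).2
    · intro t ht t' ht' hmod
      simp only [Finset.mem_filter, Finset.mem_Ico] at ht ht'
      rcases le_total t t' with hle | hle
      · exact eq_of_mod_eq_of_close hmod hle (by omega)
      · exact (eq_of_mod_eq_of_close hmod.symm hle (by omega)).symm
    · intro s hs
      have hsd := hS s hs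
      have hqd : q % d < d := Nat.mod_lt _ hd
      have h3 := Nat.div_add_mod q d
      by_cases hc : q % d ≤ s
      · have ht : q - q % d + s = s + d * (q / d) := by omega
        have hres : (q - q % d + s) % d = s := by
          rw [ht, Nat.add_mul_mod_self_left]
          exact Nat.mod_eq_of_lt hsd
        exact ⟨q - q % d + s,
          Finset.mem_filter.mpr ⟨Finset.mem_Ico.mpr ⟨by omega, by omega⟩,
            by rw [hres]; exact hs⟩, hres⟩
      · have ht : q - q % d + s + d = s + d + d * (q / d) := by omega
        have hres : (q - q % d + s + d) % d = s := by
          rw [ht, Nat.add_mul_mod_self_left, Nat.add_mod_right]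
          exact Nat.mod_eq_of_lt hsd
        exact ⟨q - q % d + s + d,
          Finset.mem_filter.mpr ⟨Finset.mem_Ico.mpr ⟨by omega, by omega⟩,
            by rw [hres]; exact hs⟩, hres⟩
  unfold cnt
  rw [hsplit, Finset.filter_union, Finset.card_union_of_disjoint hdisj, hcard]

lemma cnt_add_mul {d : ℕ} {S : Finset ℕ} (hd : 0 < d) (hS : ∀ s ∈ S, s < d) (q k : ℕ) :
    cnt d S (q + d * k) = cnt d S q + S.card * k := by
  induction k with
  | zero => simp
  | succ n ih =>
      have h1 : q + d * (n + 1) = q + d * n + d := by ring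
      rw [h1, cnt_add_d hd hS, ih]; ring

lemma cnt_modEq_aux {d : ℕ} {S : Finset ℕ} (hd : 0 < d) (hS : ∀ s ∈ S, s < d) {q q' : ℕ}
    (hle : q ≤ q') (h : q % d = q' % d) : cnt d S q ≡ cnt d S q' [MOD S.card] := by
  obtain ⟨k, hk⟩ := (Nat.modEq_iff_dvd' hle).mp h
  have hq' : q' = q + d * k := by omega
  rw [hq', cnt_add_mul hd hS]
  exact (Nat.modEq_iff_dvd' (Nat.le_add_right _ _)).mpr ⟨k, by omega⟩

lemma cnt_modEq_of_mod_eq {d : ℕ} {S : Finset ℕ} (hd : 0 < d) (hS : ∀ s ∈ S, s < d)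
    {q q' : ℕ} (h : q % d = q' % d) : cnt d S q ≡ cnt d S q' [MOD S.card] := by
  rcases le_total q q' with hle | hle
  · exact cnt_modEq_aux hd hS hle h
  · exact (cnt_modEq_aux hd hS hle h.symm).symm

lemma mod_eq_of_cnt_modEq_aux {d : ℕ} {S : Finset ℕ} (hd : 0 < d) (hS : ∀ s ∈ S, s < d)
    (hne : S.Nonempty) {q q' : ℕ} (hle : q ≤ q') (hq : q % d ∈ S) (hq' : q' % d ∈ S)
    (h : cnt d S q ≡ cnt d S q' [MOD S.card]) : q % d = q' % d := by
  have hm0 : 0 < S.card := Finset.card_pos.mpr hne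
  obtain ⟨k, r, hr, hqq⟩ : ∃ k r, r < d ∧ q' - q = d * k + r :=
    ⟨(q' - q) / d, (q' - q) % d, Nat.mod_lt _ hd, (Nat.div_add_mod _ d).symm⟩
  have h1 : q + d * k ≤ q' := by omega
  have h2 : q' < q + d * k + d := by omega
  have e1 : cnt d S (q + d * k) = cnt d S q + S.card * k := cnt_add_mul hd hS q k
  have e2 : cnt d S (q + d * k + d) = cnt d S q + S.card * k + S.card := by
    rw [cnt_add_d hd hS, e1]
  have c0 : cnt d S q ≤ cnt d S q' := cnt_mono hle
  have c1 : cnt d S q + S.card * k ≤ cnt d S q' := e1 ▸ cnt_mono h1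
  have c2 : cnt d S q' ≤ cnt d S q + S.card * k + S.card := e2 ▸ cnt_mono (le_of_lt h2)
  obtain ⟨t, ht⟩ := (Nat.modEq_iff_dvd' c0).mp h
  have hkt : S.card * k ≤ S.card * t := by omega
  have htk : S.card * t ≤ S.card * (k + 1) := by
    have : S.card * (k + 1) = S.card * k + S.card := by ring
    omega
  have hk1 : k ≤ t := Nat.le_of_mul_le_mul_left hkt hm0
  have hk2 : t ≤ k + 1 := Nat.le_of_mul_le_mul_left htk hm0
  have hres : (q + d * k) % d = q % d := Nat.add_mul_mod_self_left q d k
  have ht' : t = k ∨ t = k + 1 := by omega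
  rcases ht' with heq | heq
  · rw [heq] at ht
    have hq'eq : q' = q + d * k := by
      by_contra hne'
      have hlt : q + d * k < q' := by omega
      have := cnt_strict (by rw [hres]; exact hq) hlt
      omega
    rw [hq'eq, hres]
  · rw [heq] at ht
    exfalso
    have hlt := cnt_strict hq' h2
    rw [e2] at hlt
    have hexp : S.card * (k + 1) = S.card * k + S.card := by ring
    omega

lemma mod_eq_of_cnt_modEq {d : ℕ} {S : Finset ℕ} (hd : 0 < d) (hS : ∀ s ∈ S, s < d)
    (hne : S.Nonempty) {q q' : ℕ} (hq : q % d ∈ S) (hq' : q' % d ∈ S)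
    (h : cnt d S q ≡ cnt d S q' [MOD S.card]) : q % d = q' % d := by
  rcases le_total q q' with hle | hle
  · exact mod_eq_of_cnt_modEq_aux hd hS hne hle hq hq' h
  · exact (mod_eq_of_cnt_modEq_aux hd hS hne hle hq' hq h.symm).symm

/-! ### The key local commutation lemma -/

lemma key {d : ℕ} (hd : 0 < d) (S S' S₂ : Finset ℕ) (hSd : ∀ s ∈ S, s < d)
    (hS'd : ∀ s ∈ S', s < d) (hS'S : S' ⊆ S) (hS₂S : S₂ ⊆ S)
    (hchar : ∀ q, q % d ∈ S →
      (q % d ∈ S₂ ↔ ∃ s' ∈ S', cnt d S q ≡ cnt d S s' + 1 [MOD S.card]))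
    (p : ℕ) (hp : p % d ∈ S') :
    nextPt d S₂ (nextPt d S p) = nextPt d S (nextPt d S' p) := by
  have hpS : p % d ∈ S := hS'S hp
  have hpd : p % d < d := Nat.mod_lt _ hd
  have hexS : ∃ s ∈ S, s < d := ⟨_, hpS, hpd⟩
  have hexS' : ∃ s ∈ S', s < d := ⟨_, hp, hpd⟩
  have hneS : S.Nonempty := ⟨_, hpS⟩
  set u := nextPt d S' p with hu
  have hu1 : p < u := nextPt_gt hd hexS' p
  have hu2 : u % d ∈ S' := nextPt_mem hd hexS' p
  set R := nextPt d S u with hR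
  have hR1 : u < R := nextPt_gt hd hexS u
  have hR2 : R % d ∈ S := nextPt_mem hd hexS u
  set a := nextPt d S p with ha
  have ha1 : p < a := nextPt_gt hd hexS p
  have ha2 : a % d ∈ S := nextPt_mem hd hexS p
  have hau : a ≤ u := nextPt_min hu1 (hS'S hu2)
  have hcntR : cnt d S R = cnt d S u + 1 := cnt_nextPt hd hexS (hS'S hu2)
  have hcnta : cnt d S a = cnt d S p + 1 := cnt_nextPt hd hexS hpS
  have hRS₂ : R % d ∈ S₂ := by
    refine (hchar R hR2).2 ⟨u % d, hu2, ?_⟩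
    have h1 : cnt d S u ≡ cnt d S (u % d) [MOD S.card] :=
      cnt_modEq_of_mod_eq hd hSd (Nat.mod_eq_of_lt (Nat.mod_lt u hd)).symm
    rw [hcntR]
    exact h1.add_right 1
  have hexS₂ : ∃ s ∈ S₂, s < d := ⟨R % d, hRS₂, Nat.mod_lt _ hd⟩
  set v := nextPt d S₂ a with hv
  have hv1 : a < v := nextPt_gt hd hexS₂ a
  have hv2 : v % d ∈ S₂ := nextPt_mem hd hexS₂ a
  have hvS : v % d ∈ S := hS₂S hv2
  have hvR : v ≤ R := nextPt_min (lt_of_le_of_lt hau hR1) hRS₂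
  obtain ⟨s', hs'1, hs'2⟩ := (hchar v hvS).1 hv2
  set F := (Finset.range v).filter (fun t => t % d ∈ S) with hF
  have haF : a ∈ F := Finset.mem_filter.mpr ⟨Finset.mem_range.mpr hv1, ha2⟩
  have hFne : F.Nonempty := ⟨a, haF⟩
  set w := F.max' hFne with hw
  have hwF := F.max'_mem hFne
  have hwv : w < v := Finset.mem_range.mp (Finset.mem_filter.mp hwF).1
  have hwS : w % d ∈ S := (Finset.mem_filter.mp hwF).2
  have haw : a ≤ w := F.le_max' a haF
  have hcntv : cnt d S v = cnt d S w + 1 := by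
    apply cnt_gap hwS hwv
    intro t h1 h2 htS
    exact absurd (F.le_max' t (Finset.mem_filter.mpr ⟨Finset.mem_range.mpr h2, htS⟩))
      (by omega)
  have hwmod : w % d = s' := by
    have h1 : cnt d S w + 1 ≡ cnt d S s' + 1 [MOD S.card] := by rw [← hcntv]; exact hs'2
    have h2 : cnt d S w ≡ cnt d S s' [MOD S.card] := Nat.ModEq.add_right_cancel' 1 h1
    have hs'd := hS'd s' hs'1
    have h3 := mod_eq_of_cnt_modEq hd hSd hneS hwS
      (by rw [Nat.mod_eq_of_lt hs'd]; exact hS'S hs'1) h2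
    rwa [Nat.mod_eq_of_lt hs'd] at h3
  have hwS' : w % d ∈ S' := hwmod ▸ hs'1
  have hpw : p < w := lt_of_lt_of_le ha1 haw
  have huw : u ≤ w := nextPt_min hpw hwS'
  have hcmp : cnt d S R ≤ cnt d S v := by
    rw [hcntR, hcntv]
    exact Nat.add_le_add_right (cnt_mono huw) 1
  have hRv : R ≤ v := by
    by_contra hc
    have := cnt_strict hvS (not_le.mp hc)
    omega
  exact le_antisymm hvR hRv


/-! ### Structure of configurations -/

lemma res_pt {d : ℕ} (x : Fin d → ℕ) (i : Fin d) : (x i * d + i.val) % d = i.val := by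
  rw [mul_comm, Nat.mul_add_mod, Nat.mod_eq_of_lt i.isLt]

lemma pts_injres {d : ℕ} (x : Fin d → ℕ) :
    ∀ q ∈ pts d x, ∀ q' ∈ pts d x, q % d = q' % d → q = q' := by
  intro q hq q' hq' h
  simp only [pts, Finset.mem_image, Finset.mem_univ, true_and] at hq hq'
  obtain ⟨i, rfl⟩ := hq
  obtain ⟨i', rfl⟩ := hq'
  rw [res_pt, res_pt] at h
  rw [Fin.val_eq_val] at h
  rw [h]

lemma card_pts {d : ℕ} (x : Fin d → ℕ) : (pts d x).card = d := by
  unfold pts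
  rw [Finset.card_image_of_injective _ ?inj, Finset.card_univ, Fintype.card_fin]
  case inj =>
    intro i i' hii
    change x i * d + i.val = x i' * d + i'.val at hii
    have h1 := res_pt x i
    have h2 := res_pt x i'
    rw [hii, h2] at h1
    exact (Fin.val_eq_val _ _).mp h1.symm

/-! ### Reading off a configuration from a transversal -/

lemma readoff {d : ℕ} (hd : 0 < d) (Q : Finset ℕ) (hcard : Q.card = d)
    (hinj : ∀ q ∈ Q, ∀ q' ∈ Q, q % d = q' % d → q = q') :
    pts d (fun i : Fin d => ∑ q ∈ Q.filter (fun q => q % d = i.val), q / d) = Q := by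
  have himg : Q.image (· % d) = Finset.range d := by
    apply Finset.eq_of_subset_of_card_le
    · intro r hr
      obtain ⟨q, hq, rfl⟩ := Finset.mem_image.mp hr
      exact Finset.mem_range.mpr (Nat.mod_lt _ hd)
    · rw [Finset.card_range,
        Finset.card_image_of_injOn (fun q hq q' hq' h => hinj q hq q' hq' h), hcard]
  have hex : ∀ i : Fin d, ∃ q, q ∈ Q ∧ q % d = i.val := by
    intro i
    have : (i : ℕ) ∈ Q.image (· % d) := by rw [himg]; exact Finset.mem_range.mpr i.isLt
    obtain ⟨q, hq, hq2⟩ := Finset.mem_image.mp this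
    exact ⟨q, hq, hq2⟩
  choose f hf1 hf2 using hex
  have hfilter : ∀ i : Fin d, Q.filter (fun q => q % d = i.val) = {f i} := by
    intro i
    ext q
    simp only [Finset.mem_filter, Finset.mem_singleton]
    constructor
    · rintro ⟨hq, hmod⟩
      exact hinj q hq (f i) (hf1 i) (by rw [hmod, hf2 i])
    · rintro rfl
      exact ⟨hf1 i, hf2 i⟩
  have hval : ∀ i : Fin d, (∑ q ∈ Q.filter (fun q => q % d = i.val), q / d) = f i / d := by
    intro i; rw [hfilter i, Finset.sum_singleton]
  have hfd : ∀ i : Fin d, f i / d * d + i.val = f i := by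
    intro i
    have h3 := Nat.div_add_mod (f i) d
    have h4 := hf2 i
    have h5 : d * (f i / d) = f i / d * d := mul_comm _ _
    omega
  unfold pts
  ext q
  simp only [Finset.mem_image, Finset.mem_univ, true_and]
  constructor
  · rintro ⟨i, rfl⟩
    rw [hval i, hfd i]
    exact hf1 i
  · intro hq
    refine ⟨⟨q % d, Nat.mod_lt _ hd⟩, ?_⟩
    have hfi : f ⟨q % d, Nat.mod_lt _ hd⟩ = q :=
      hinj _ (hf1 _) q hq (by rw [hf2])
    rw [hval, hfi]
    show q / d * d + q % d = q
    have h3 := Nat.div_add_mod q d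
    have h5 : d * (q / d) = q / d * d := mul_comm _ _
    omega

lemma gOp_def (d jj : ℕ) (z : Fin d → ℕ) (i : Fin d) :
    gOp d jj z i =
      ∑ q ∈ ((((sortedPts d z).take (jj - 1)).toFinset ∪
          (((sortedPts d z).drop (jj - 1)).map
            (nextPt d (((sortedPts d z).drop (jj - 1)).toFinset.image (· % d)))).toFinset).filter
          (fun q => q % d = i.val)), q / d := rfl

/-! ### One step of the spiral shift, structurally -/

lemma step {d : ℕ} (hd : 0 < d) (x : Fin d → ℕ) (j : ℕ) (hj1 : 1 ≤ j) (hjd : j ≤ d) :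
    sortedPts d (gOp d j x) =
      (sortedPts d x).take (j - 1) ++
        ((sortedPts d x).drop (j - 1)).map
          (nextPt d (((sortedPts d x).drop (j - 1)).toFinset.image (· % d))) := by
  set L := sortedPts d x with hL
  set low := L.take (j - 1) with hlow
  set high := L.drop (j - 1) with hhigh
  set S := high.toFinset.image (· % d) with hS
  have hLsortlt : L.Pairwise (· < ·) := (Finset.sortedLT_sort _).pairwise
  have hLlen : L.length = d := by
    rw [hL, sortedPts, Finset.length_sort, card_pts]
  have hmemL : ∀ q ∈ L, q ∈ pts d x := fun q hq => (Finset.mem_sort _).mp hq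
  have hinjL : ∀ q ∈ L, ∀ q' ∈ L, q % d = q' % d → q = q' := fun q hq q' hq' h =>
    pts_injres x q (hmemL q hq) q' (hmemL q' hq') h
  have hsplitL : low ++ high = L := List.take_append_drop _ _
  have hhighlen : high.length = d - (j - 1) := by rw [hhigh, List.length_drop, hLlen]
  have hlowlen : low.length = j - 1 := by rw [hlow, List.length_take, hLlen]; omega
  have hhigh_ne : high ≠ [] := by
    intro hcon
    rw [hcon] at hhighlen
    simp at hhighlen
    omega
  have hmemhigh : ∀ q ∈ high, q ∈ L := fun q hq => hsplitL ▸ List.mem_append_right _ hq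
  have hmemlow : ∀ q ∈ low, q ∈ L := fun q hq => hsplitL ▸ List.mem_append_left _ hq
  have hSd : ∀ s ∈ S, s < d := by
    intro s hs
    obtain ⟨q, hq, rfl⟩ := Finset.mem_image.mp hs
    exact Nat.mod_lt _ hd
  have hresidhigh : ∀ q ∈ high, q % d ∈ S := fun q hq =>
    Finset.mem_image.mpr ⟨q, List.mem_toFinset.mpr hq, rfl⟩
  have hexS : ∃ s ∈ S, s < d := by
    obtain ⟨q, hq⟩ := List.exists_mem_of_ne_nil high hhigh_ne
    exact ⟨q % d, hresidhigh q hq, Nat.mod_lt _ hd⟩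
  have hsortlh : (low ++ high).Pairwise (· < ·) := by rw [hsplitL]; exact hLsortlt
  have hcross := (List.pairwise_append.mp hsortlh).2.2
  have hlowsort : low.Pairwise (· < ·) := (List.pairwise_append.mp hsortlh).1
  have hhighsort : high.Pairwise (· < ·) := (List.pairwise_append.mp hsortlh).2.1
  have hνmono : ∀ a ∈ high, ∀ b ∈ high, a < b → nextPt d S a < nextPt d S b := by
    intro a ha b hb hab
    have h1 : nextPt d S a ≤ b := nextPt_min hab (hresidhigh b hb)
    have h2 : b < nextPt d S b := nextPt_gt hd hexS b
    omega
  set M := low ++ high.map (nextPt d S) with hM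
  have hMsort : M.Pairwise (· < ·) := by
    rw [hM]
    refine List.pairwise_append.mpr ⟨hlowsort, ?_, ?_⟩
    · rw [List.pairwise_map]
      exact hhighsort.imp_of_mem (fun ha hb h => hνmono _ ha _ hb h)
    · intro l hl b hb
      obtain ⟨q, hq, rfl⟩ := List.mem_map.mp hb
      exact lt_trans (hcross l hl q hq) (nextPt_gt hd hexS q)
  have hMnodup : M.Nodup := hMsort.imp (fun h => ne_of_lt h)
  have hMlen : M.length = d := by
    rw [hM, List.length_append, List.length_map, hlowlen, hhighlen]
    omega
  have hlowS : ∀ l ∈ low, l % d ∉ S := by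
    intro l hl hcon
    obtain ⟨q, hq, hq2⟩ := Finset.mem_image.mp hcon
    have hq' := List.mem_toFinset.mp hq
    have heq : q = l := hinjL q (hmemhigh q hq') l (hmemlow l hl) hq2
    have := hcross l hl q hq'
    omega
  have hmapinj : ∀ p ∈ high.map (nextPt d S), ∀ p' ∈ high.map (nextPt d S),
      p % d = p' % d → p = p' := by
    intro p hp p' hp' h
    obtain ⟨a, ha, rfl⟩ := List.mem_map.mp hp
    obtain ⟨b, hb, rfl⟩ := List.mem_map.mp hp'
    have h1 : cnt d S (nextPt d S a) ≡ cnt d S (nextPt d S b) [MOD S.card] :=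
      cnt_modEq_of_mod_eq hd hSd h
    rw [cnt_nextPt hd hexS (hresidhigh a ha), cnt_nextPt hd hexS (hresidhigh b hb)] at h1
    have h2 := Nat.ModEq.add_right_cancel' 1 h1
    have h3 := mod_eq_of_cnt_modEq hd hSd ⟨_, hresidhigh a ha⟩ (hresidhigh a ha)
      (hresidhigh b hb) h2
    rw [hinjL a (hmemhigh a ha) b (hmemhigh b hb) h3]
  have hinjM : ∀ q ∈ M, ∀ q' ∈ M, q % d = q' % d → q = q' := by
    intro q hq q' hq'
    rw [hM] at hq hq'
    intro h
    rcases List.mem_append.mp hq with h1 | h1 <;> rcases List.mem_append.mp hq' with h2 | h2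
    · exact hinjL q (hmemlow q h1) q' (hmemlow q' h2) h
    · obtain ⟨b, hb, rfl⟩ := List.mem_map.mp h2
      have : q % d ∈ S := by rw [h]; exact nextPt_mem hd hexS b
      exact absurd this (hlowS q h1)
    · obtain ⟨b, hb, rfl⟩ := List.mem_map.mp h1
      have : q' % d ∈ S := by rw [← h]; exact nextPt_mem hd hexS b
      exact absurd this (hlowS q' h2)
    · exact hmapinj q h1 q' h2 h
  have hpts : pts d (gOp d j x) = M.toFinset := by
    have hfun : gOp d j x =
        fun i : Fin d => ∑ q ∈ M.toFinset.filter (fun q => q % d = i.val), q / d := by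
      funext i
      rw [gOp_def]
      rw [← hL, ← hlow, ← hhigh, ← hS, hM, List.toFinset_append]
    rw [hfun]
    exact readoff hd M.toFinset (by rw [List.toFinset_card_of_nodup hMnodup, hMlen])
      (fun q hq q' hq' h => hinjM q (List.mem_toFinset.mp hq) q' (List.mem_toFinset.mp hq') h)
  have hfinal : sortedPts d (gOp d j x) = M := by
    rw [sortedPts, hpts]
    exact (fun hp h1 h2 => List.Perm.eq_of_pairwise' h1 h2 hp)
      (List.perm_of_nodup_nodup_toFinset_eq (Finset.sort_nodup _ _) hMnodup
        (by rw [Finset.sort_toFinset]))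
      (Finset.pairwise_sort _ _) (hMsort.imp (fun h => le_of_lt h))
  exact hfinal

/-! ### Commutation -/

lemma comm_aux {d : ℕ} (hd : 0 < d) (j j' : ℕ) (hj1 : 1 ≤ j) (hjj' : j ≤ j')
    (hj'd : j' ≤ d) (x : Fin d → ℕ) :
    gOp d j' (gOp d j x) = gOp d j (gOp d j' x) := by
  have hjd : j ≤ d := le_trans hjj' hj'd
  have hj'1 : 1 ≤ j' := le_trans hj1 hjj'
  set L := sortedPts d x with hL
  set low := L.take (j - 1) with hlow
  set high := L.drop (j - 1) with hhigh
  set mid := high.take (j' - j) with hmid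
  set tail := high.drop (j' - j) with htail
  set S := high.toFinset.image (· % d) with hS
  set S' := tail.toFinset.image (· % d) with hS'
  have hLsortlt : L.Pairwise (· < ·) := (Finset.sortedLT_sort _).pairwise
  have hLlen : L.length = d := by rw [hL, sortedPts, Finset.length_sort, card_pts]
  have hmemL : ∀ q ∈ L, q ∈ pts d x := fun q hq => (Finset.mem_sort _).mp hq
  have hinjL : ∀ q ∈ L, ∀ q' ∈ L, q % d = q' % d → q = q' := fun q hq q' hq' h =>
    pts_injres x q (hmemL q hq) q' (hmemL q' hq') h
  have hLnodup : L.Nodup := Finset.sort_nodup _ _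
  have hhighlen : high.length = d - (j - 1) := by rw [hhigh, List.length_drop, hLlen]
  have hlowlen : low.length = j - 1 := by rw [hlow, List.length_take, hLlen]; omega
  have hmidlen : mid.length = j' - j := by rw [hmid, List.length_take, hhighlen]; omega
  have htaillen : tail.length = d - (j' - 1) := by rw [htail, List.length_drop, hhighlen]; omega
  have hmidtail : mid ++ tail = high := List.take_append_drop _ _
  have harith : j' - 1 = (j - 1) + (j' - j) := by omega
  have hdropb : L.drop (j' - 1) = tail := by
    rw [harith, ← List.drop_drop]
  have htakeb : L.take (j' - 1) = low ++ mid := by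
    rw [harith, List.take_add]
  have htail_ne : tail ≠ [] := by
    intro hcon
    rw [hcon] at htaillen
    simp at htaillen
    omega
  have hmemhigh : ∀ q ∈ high, q ∈ L := fun q hq => List.drop_subset _ _ hq
  have htailsub : ∀ q ∈ tail, q ∈ high := fun q hq => List.drop_subset _ _ hq
  have hmidsub : ∀ q ∈ mid, q ∈ high := fun q hq => List.take_subset _ _ hq
  have htailmemL : ∀ q ∈ tail, q ∈ L := fun q hq => hmemhigh q (htailsub q hq)
  have hSd : ∀ s ∈ S, s < d := by
    intro s hs
    obtain ⟨q, hq, rfl⟩ := Finset.mem_image.mp hs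
    exact Nat.mod_lt _ hd
  have hS'd : ∀ s ∈ S', s < d := by
    intro s hs
    obtain ⟨q, hq, rfl⟩ := Finset.mem_image.mp hs
    exact Nat.mod_lt _ hd
  have hhigh_res : ∀ q ∈ high, q % d ∈ S := fun q hq =>
    Finset.mem_image.mpr ⟨q, List.mem_toFinset.mpr hq, rfl⟩
  have htail_res : ∀ q ∈ tail, q % d ∈ S' := fun q hq =>
    Finset.mem_image.mpr ⟨q, List.mem_toFinset.mpr hq, rfl⟩
  have hexS' : ∃ s ∈ S', s < d := by
    obtain ⟨q, hq⟩ := List.exists_mem_of_ne_nil tail htail_ne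
    exact ⟨q % d, htail_res q hq, Nat.mod_lt _ hd⟩
  have hexS : ∃ s ∈ S, s < d := by
    obtain ⟨q, hq⟩ := List.exists_mem_of_ne_nil tail htail_ne
    exact ⟨q % d, hhigh_res q (htailsub q hq), Nat.mod_lt _ hd⟩
  have hS'S : S' ⊆ S := by
    intro s hs
    obtain ⟨q, hq, rfl⟩ := Finset.mem_image.mp hs
    exact hhigh_res q (htailsub q (List.mem_toFinset.mp hq))
  have htailnodup : tail.Nodup := by
    rw [← hdropb]
    exact hLnodup.sublist (List.drop_sublist _ _)
  -- the two step computations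
  have hstep1 := step hd x j hj1 hjd
  rw [← hL, ← hlow, ← hhigh, ← hS] at hstep1
  have hstep2 := step hd x j' hj'1 hj'd
  rw [← hL, hdropb, htakeb, ← hS'] at hstep2
  -- LHS list form
  have hstep1' : sortedPts d (gOp d j x) =
      (low ++ mid.map (nextPt d S)) ++ tail.map (nextPt d S) := by
    rw [hstep1, ← hmidtail, List.map_append, List.append_assoc]
  have hlen1 : (low ++ mid.map (nextPt d S)).length = j' - 1 := by
    rw [List.length_append, List.length_map, hlowlen, hmidlen]
    omega
  -- RHS list form
  have hstep2' : sortedPts d (gOp d j' x) =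
      low ++ (mid ++ tail.map (nextPt d S')) := by
    rw [hstep2, List.append_assoc]
  -- S₂ characterization for the key lemma
  have hS₂S : ((tail.map (nextPt d S)).toFinset.image (· % d)) ⊆ S := by
    intro s hs
    obtain ⟨p, hp, rfl⟩ := Finset.mem_image.mp hs
    obtain ⟨w, hw, rfl⟩ := List.mem_map.mp (List.mem_toFinset.mp hp)
    exact nextPt_mem hd hexS w
  have hchar : ∀ q, q % d ∈ S →
      (q % d ∈ ((tail.map (nextPt d S)).toFinset.image (· % d)) ↔
        ∃ s' ∈ S', cnt d S q ≡ cnt d S s' + 1 [MOD S.card]) := by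
    intro q hqS
    constructor
    · intro hq2
      obtain ⟨p, hp, hpq⟩ := Finset.mem_image.mp hq2
      obtain ⟨w, hw, rfl⟩ := List.mem_map.mp (List.mem_toFinset.mp hp)
      refine ⟨w % d, htail_res w hw, ?_⟩
      have h1 : cnt d S q ≡ cnt d S (nextPt d S w) [MOD S.card] :=
        cnt_modEq_of_mod_eq hd hSd hpq.symm
      rw [cnt_nextPt hd hexS (hhigh_res w (htailsub w hw))] at h1
      have h2 : cnt d S w ≡ cnt d S (w % d) [MOD S.card] :=
        cnt_modEq_of_mod_eq hd hSd (Nat.mod_eq_of_lt (Nat.mod_lt w hd)).symm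
      exact h1.trans (h2.add_right 1)
    · rintro ⟨s', hs', hmod⟩
      obtain ⟨w, hw, hws⟩ := Finset.mem_image.mp hs'
      have hwt := List.mem_toFinset.mp hw
      have h2 : cnt d S s' ≡ cnt d S w [MOD S.card] := by
        apply cnt_modEq_of_mod_eq hd hSd
        rw [← hws, Nat.mod_eq_of_lt (Nat.mod_lt w hd)]
      have h1 : cnt d S q ≡ cnt d S (nextPt d S w) [MOD S.card] := by
        rw [cnt_nextPt hd hexS (hhigh_res w (htailsub w hwt))]
        exact hmod.trans (h2.add_right 1)
      have h3 : q % d = nextPt d S w % d :=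
        mod_eq_of_cnt_modEq hd hSd ⟨_, hqS⟩ hqS (nextPt_mem hd hexS w) h1
      exact Finset.mem_image.mpr
        ⟨nextPt d S w, List.mem_toFinset.mpr (List.mem_map.mpr ⟨w, hwt, rfl⟩), h3.symm⟩
  have hkey : ∀ t ∈ tail,
      nextPt d ((tail.map (nextPt d S)).toFinset.image (· % d)) (nextPt d S t) =
        nextPt d S (nextPt d S' t) := by
    intro t ht
    exact key hd S S' _ hSd hS'd hS'S hS₂S hchar t (htail_res t ht)
  -- residues of the ν'-shifted tail are again S'
  have hν'inj : ∀ w ∈ tail, ∀ w' ∈ tail,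
      nextPt d S' w % d = nextPt d S' w' % d → w = w' := by
    intro w hw w' hw' h
    have h1 : cnt d S' (nextPt d S' w) ≡ cnt d S' (nextPt d S' w') [MOD S'.card] :=
      cnt_modEq_of_mod_eq hd hS'd h
    rw [cnt_nextPt hd hexS' (htail_res w hw), cnt_nextPt hd hexS' (htail_res w' hw')] at h1
    have h2 := Nat.ModEq.add_right_cancel' 1 h1
    have h3 := mod_eq_of_cnt_modEq hd hS'd ⟨_, htail_res w hw⟩ (htail_res w hw)
      (htail_res w' hw') h2
    exact hinjL w (htailmemL w hw) w' (htailmemL w' hw') h3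
  have hresmap : (tail.map (nextPt d S')).toFinset.image (· % d) = S' := by
    apply Finset.eq_of_subset_of_card_le
    · intro s hs
      obtain ⟨p, hp, rfl⟩ := Finset.mem_image.mp hs
      obtain ⟨w, hw, rfl⟩ := List.mem_map.mp (List.mem_toFinset.mp hp)
      exact nextPt_mem hd hexS' w
    · have hmapnodup : (tail.map (nextPt d S')).Nodup :=
        List.Nodup.map_on
          (fun a ha b hb hfab => hν'inj a ha b hb (by rw [hfab])) htailnodup
      have c1 : ((tail.map (nextPt d S')).toFinset.image (· % d)).card = tail.length := by
        rw [Finset.card_image_of_injOn, List.toFinset_card_of_nodup hmapnodup,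
          List.length_map]
        intro p hp p' hp' h
        obtain ⟨w, hw, rfl⟩ := List.mem_map.mp (List.mem_toFinset.mp (Finset.mem_coe.mp hp))
        obtain ⟨w', hw', rfl⟩ := List.mem_map.mp (List.mem_toFinset.mp (Finset.mem_coe.mp hp'))
        rw [hν'inj w hw w' hw' h]
      have c2 : S'.card = tail.length := by
        rw [hS', Finset.card_image_of_injOn, List.toFinset_card_of_nodup htailnodup]
        intro q hq q' hq' h
        exact hinjL q (htailmemL q (List.mem_toFinset.mp (Finset.mem_coe.mp hq)))
          q' (htailmemL q' (List.mem_toFinset.mp (Finset.mem_coe.mp hq'))) h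
      rw [c1, c2]
  have hS'' : ((mid ++ tail.map (nextPt d S')).toFinset.image (· % d)) = S := by
    rw [List.toFinset_append, Finset.image_union, hresmap, hS, ← hmidtail,
      List.toFinset_append, Finset.image_union, ← hS']
  -- assemble
  funext i
  rw [gOp_def d j' (gOp d j x) i, gOp_def d j (gOp d j' x) i, hstep1', hstep2',
    List.take_left' hlen1, List.drop_left' hlen1,
    List.take_left' hlowlen, List.drop_left' hlowlen, hS'']
  have hsets : (low ++ mid.map (nextPt d S)).toFinset ∪
      ((tail.map (nextPt d S)).map
        (nextPt d ((tail.map (nextPt d S)).toFinset.image (· % d)))).toFinset =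
      low.toFinset ∪ ((mid ++ tail.map (nextPt d S')).map (nextPt d S)).toFinset := by
    rw [List.toFinset_append, List.map_append, List.toFinset_append, Finset.union_assoc]
    congr 1
    congr 1
    rw [List.map_map, List.map_map]
    congr 1
    apply List.map_congr_left
    intro t ht
    simp only [Function.comp_apply]
    exact hkey t ht
  rw [hsets]

end SpiralAux

open Spiral in
/-- For all `j, j′ ∈ [d]`, the spiral shifting operators commute:
`g_{j′} ∘ g_j = g_j ∘ g_{j′}` as maps `ℕ^d → ℕ^d`. -/
theorem statement4 (d : ℕ) (hd : 1 ≤ d) (j j' : ℕ) (hj1 : 1 ≤ j) (hjd : j ≤ d)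
    (hj'1 : 1 ≤ j') (hj'd : j' ≤ d) :
    gOp d j' ∘ gOp d j = gOp d j ∘ gOp d j' := by
  rcases le_total j j' with h | h
  · funext x
    simp only [Function.comp_apply]
    exact SpiralAux.comm_aux hd j j' hj1 h hj'd x
  · funext x
    simp only [Function.comp_apply]
    exact (SpiralAux.comm_aux hd j' j hj'1 h hjd x).symm
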